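/- Let E_r, A_r ∈ ℝ^{n×n} with E_r invertible and every complex root λ of det(A_r − λE_r) satisfying Re λ < 0. Let B_r ∈ ℝ^{n×m}, C_r ∈ ℝ^{(p+m)×n}, D_r ∈ ℝ^{(p+m)×m}, let [N; M] := C_r(sE_r − A_r)^{−1}B_r + D_r (N the first p rows, M the last m rows), assume det M ≢ 0, that there exist stable X̃, Ỹ with ỸM − X̃N = I_m, and let H_r ∈ ℝ^{m×m} be invertible with H_rᵀH_r = D_rᵀD_r. Let X_r be a symmetric stabilizing solution of the GCARE with stabilizing feedback F_r := −(D_rᵀD_r)^{−1}(B_rᵀX_rE_r + D_rᵀC_r), and define G₀ := −H_rF_r(sE_r − A_r)^{−1}B_r + H_r ∈ ℝ(s)^{m×m}. Then det G₀ ≢ 0, and the pair N̂ := N G₀^{−1}, M̂ := M G₀^{−1} is a stable normalized right coprime factorization of G := N M^{−1}: N̂ and M̂ are stable, det M̂ ≢ 0, G = N̂ M̂^{−1}, there exist stable X̃′, Ỹ′ with Ỹ′M̂ − X̃′N̂ = I_m, and the normalization identity (N̂(−s))ᵀN̂(s) + (M̂(−s))ᵀM̂(s) = I_m holds. -/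

import Mathlib

open Matrix Polynomial
open scoped Kronecker

set_option synthInstance.maxHeartbeats 400000
set_option maxHeartbeats 1000000

noncomputable section

/-- The field ℝ(s) of real rational functions. -/
abbrev RF := RatFunc ℝ

/-- A rational function is proper if the degree of its numerator (in lowest terms)
is at most the degree of its denominator. -/
def RFproper (f : RF) : Prop := f.num.degree ≤ f.denom.degree

/-- A rational function is stable: proper and every complex root of its denominator
has strictly negative real part. -/
def RFstable (f : RF) : Prop :=
  RFproper f ∧ ∀ z : ℂ, Polynomial.aeval z f.denom = 0 → z.re < 0

/-- A rational matrix is stable (lies in RH∞) iff every entry is stable. -/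
def MStable {p m : Type*} (G : Matrix p m RF) : Prop := ∀ i j, RFstable (G i j)

/-- A real matrix viewed as a matrix over ℝ(s). -/
def toRF {p m : Type*} (M : Matrix p m ℝ) : Matrix p m RF := M.map (algebraMap ℝ RF)

/-- A real matrix viewed as a matrix over ℂ. -/
def toC {p m : Type*} (M : Matrix p m ℝ) : Matrix p m ℂ := M.map (fun x => (x : ℂ))

/-- The pencil A - s E as a matrix over ℝ(s). -/
def pencilRF {n : Type*} (A E : Matrix n n ℝ) : Matrix n n RF :=
  toRF A - (RatFunc.X : RF) • toRF E

/-- Admissible pencil: regular, every finite generalized eigenvalue in the open left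
half-plane, and deg det(sE - A) = rank E (all infinite generalized eigenvalues have
partial multiplicity at most 1). -/
def Admissible {n : Type*} [Fintype n] [DecidableEq n] (A E : Matrix n n ℝ) : Prop :=
  (pencilRF A E).det ≠ 0 ∧
  (∀ z : ℂ, (toC A - z • toC E).det = 0 → z.re < 0) ∧
  (Matrix.of fun i j => Polynomial.X * Polynomial.C (E i j) - Polynomial.C (A i j)).det.natDegree
    = E.rank

/-- Transfer function matrix C (sE - A)⁻¹ B + D of a descriptor realization. -/
def tfm {n p m : Type*} [Fintype n] [DecidableEq n] (E A : Matrix n n ℝ)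
    (B : Matrix n m ℝ) (C : Matrix p n ℝ) (D : Matrix p m ℝ) : Matrix p m RF :=
  toRF C * ((RatFunc.X : RF) • toRF E - toRF A)⁻¹ * toRF B + toRF D

/-- Substitution s ↦ -s in a rational function. -/
def flipS (f : RF) : RF := RatFunc.eval (algebraMap ℝ RF) (-(RatFunc.X : RF)) f

open Matrix Polynomial
set_option maxHeartbeats 1000000

section AuxStable

lemma RFstable_div {pp q : Polynomial ℝ} (hq : q ≠ 0) (hd : pp.degree ≤ q.degree)
    (hroots : ∀ z : ℂ, Polynomial.aeval z q = 0 → z.re < 0) :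
    RFstable (algebraMap (Polynomial ℝ) RF pp / algebraMap (Polynomial ℝ) RF q) := by
  set f := algebraMap (Polynomial ℝ) RF pp / algebraMap (Polynomial ℝ) RF q with hf
  have hdvd : f.denom ∣ q := RatFunc.denom_div_dvd pp q
  constructor
  · -- proper
    rcases eq_or_ne f.num 0 with h0 | h0
    · simp [RFproper, h0]
    · have hfne : f ≠ 0 := by
        intro h; rw [h] at h0; exact h0 RatFunc.num_zero
      have hppne : pp ≠ 0 := by
        rintro rfl; simp [hf] at hfne
      have hcross : f.num * q = f.denom * pp := by
        apply RatFunc.algebraMap_injective ℝ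
        rw [_root_.map_mul, _root_.map_mul]
        have h1 : algebraMap (Polynomial ℝ) RF f.num / algebraMap _ RF f.denom
            = algebraMap _ RF pp / algebraMap _ RF q := by
          rw [RatFunc.num_div_denom]
        rw [div_eq_div_iff (RatFunc.algebraMap_ne_zero f.denom_ne_zero)
          (RatFunc.algebraMap_ne_zero hq)] at h1
        rw [h1]; ring
      have hdeg : f.num.natDegree + q.natDegree = f.denom.natDegree + pp.natDegree := by
        rw [← Polynomial.natDegree_mul h0 hq, ← Polynomial.natDegree_mul f.denom_ne_zero hppne,
          hcross]
      have hd' : pp.natDegree ≤ q.natDegree := Polynomial.natDegree_le_natDegree hd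
      rw [RFproper, Polynomial.degree_eq_natDegree h0,
        Polynomial.degree_eq_natDegree f.denom_ne_zero]
      exact_mod_cast (by omega : f.num.natDegree ≤ f.denom.natDegree)
  · intro z hz
    obtain ⟨r, hr⟩ := hdvd
    apply hroots z
    rw [hr, _root_.map_mul, hz, zero_mul]

lemma RFstable_const (c : ℝ) : RFstable (algebraMap ℝ RF c) := by
  have : algebraMap ℝ RF c
      = algebraMap (Polynomial ℝ) RF (Polynomial.C c) / algebraMap (Polynomial ℝ) RF 1 := by
    simp [← RatFunc.algebraMap_C]
  rw [this]
  apply RFstable_div one_ne_zero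
  · simpa using Polynomial.degree_C_le
  · intro z hz; simp at hz

lemma RFstable_rep {f : RF} (h : RFstable f) :
    ∃ pp q : Polynomial ℝ, q ≠ 0 ∧ pp.degree ≤ q.degree ∧
      (∀ z : ℂ, Polynomial.aeval z q = 0 → z.re < 0) ∧
      f = algebraMap (Polynomial ℝ) RF pp / algebraMap (Polynomial ℝ) RF q :=
  ⟨f.num, f.denom, f.denom_ne_zero, h.1, h.2, (RatFunc.num_div_denom f).symm⟩

lemma RFstable.mul {f g : RF} (hf : RFstable f) (hg : RFstable g) : RFstable (f * g) := by
  obtain ⟨p1, q1, hq1, hd1, hr1, rfl⟩ := RFstable_rep hf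
  obtain ⟨p2, q2, hq2, hd2, hr2, rfl⟩ := RFstable_rep hg
  have : algebraMap (Polynomial ℝ) RF p1 / algebraMap (Polynomial ℝ) RF q1 *
      (algebraMap (Polynomial ℝ) RF p2 / algebraMap (Polynomial ℝ) RF q2)
      = algebraMap (Polynomial ℝ) RF (p1 * p2) / algebraMap (Polynomial ℝ) RF (q1 * q2) := by
    rw [_root_.map_mul, _root_.map_mul]; ring
  rw [this]
  apply RFstable_div (mul_ne_zero hq1 hq2)
  · rw [Polynomial.degree_mul, Polynomial.degree_mul]
    exact add_le_add hd1 hd2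
  · intro z hz
    rw [_root_.map_mul, mul_eq_zero] at hz
    rcases hz with h | h
    exacts [hr1 z h, hr2 z h]

lemma RFstable.add {f g : RF} (hf : RFstable f) (hg : RFstable g) : RFstable (f + g) := by
  obtain ⟨p1, q1, hq1, hd1, hr1, rfl⟩ := RFstable_rep hf
  obtain ⟨p2, q2, hq2, hd2, hr2, rfl⟩ := RFstable_rep hg
  have : algebraMap (Polynomial ℝ) RF p1 / algebraMap (Polynomial ℝ) RF q1 +
      algebraMap (Polynomial ℝ) RF p2 / algebraMap (Polynomial ℝ) RF q2
      = algebraMap (Polynomial ℝ) RF (p1 * q2 + p2 * q1) / algebraMap (Polynomial ℝ) RF (q1 * q2) := by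
    rw [_root_.map_mul, _root_.map_add, _root_.map_mul, _root_.map_mul]
    field_simp [RatFunc.algebraMap_ne_zero hq1, RatFunc.algebraMap_ne_zero hq2]
  rw [this]
  apply RFstable_div (mul_ne_zero hq1 hq2)
  · refine le_trans (Polynomial.degree_add_le _ _) ?_
    rw [Polynomial.degree_mul, Polynomial.degree_mul, Polynomial.degree_mul]
    exact max_le (add_le_add hd1 le_rfl) (by rw [add_comm (q1.degree)]; exact add_le_add hd2 le_rfl)
  · intro z hz
    rw [_root_.map_mul, mul_eq_zero] at hz
    rcases hz with h | h
    exacts [hr1 z h, hr2 z h]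

lemma RFstable_zero : RFstable (0 : RF) := by
  simpa using RFstable_const 0

lemma RFstable_sum {α : Type*} (s : Finset α) (f : α → RF) (h : ∀ a ∈ s, RFstable (f a)) :
    RFstable (∑ a ∈ s, f a) := by
  classical
  induction s using Finset.induction_on with
  | empty => simpa using RFstable_zero
  | insert _ _ hx ih =>
    rw [Finset.sum_insert hx]
    exact RFstable.add (h _ (Finset.mem_insert_self _ _))
      (ih fun a ha => h a (Finset.mem_insert_of_mem ha))

lemma MStable.mul {a b c : Type*} [Fintype b] {A : Matrix a b RF} {B : Matrix b c RF}
    (hA : MStable A) (hB : MStable B) : MStable (A * B) := by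
  intro i j
  rw [Matrix.mul_apply]
  exact RFstable_sum _ _ fun k _ => (hA i k).mul (hB k j)

end AuxStable
section AuxPencil

variable {nn : ℕ}

/-- polynomial pencil sE - A -/
def Ppoly (E A : Matrix (Fin nn) (Fin nn) ℝ) : Matrix (Fin nn) (Fin nn) (Polynomial ℝ) :=
  Matrix.of fun i j => Polynomial.X * Polynomial.C (E i j) - Polynomial.C (A i j)

lemma Ppoly_entry_degree (E A : Matrix (Fin nn) (Fin nn) ℝ) (i j : Fin nn) :
    (Ppoly E A i j).degree ≤ 1 := by
  refine le_trans (Polynomial.degree_sub_le _ _) (max_le ?_ ?_)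
  · refine le_trans (Polynomial.degree_mul_le _ _) ?_
    have := add_le_add (Polynomial.degree_X_le (R := ℝ)) (Polynomial.degree_C_le (a := E i j))
    simpa using this
  · exact Polynomial.degree_C_le.trans (by norm_num : (0:WithBot ℕ) ≤ 1)

lemma det_degree_le {k : ℕ} (M : Matrix (Fin k) (Fin k) (Polynomial ℝ))
    (h : ∀ i j, (M i j).degree ≤ 1) : M.det.degree ≤ (k : WithBot ℕ) := by
  rw [Matrix.det_apply']
  refine le_trans (Polynomial.degree_sum_le _ _) (Finset.sup_le fun σ _ => ?_)
  refine le_trans (Polynomial.degree_mul_le _ _) ?_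
  have h1 : (Equiv.Perm.sign σ : Polynomial ℝ).degree ≤ 0 := Polynomial.degree_intCast_le _
  have h2 : (∏ i, M (σ i) i).degree ≤ (k : WithBot ℕ) := by
    refine le_trans (Polynomial.degree_prod_le _ _) ?_
    calc ∑ i : Fin k, (M (σ i) i).degree ≤ ∑ _i : Fin k, (1 : WithBot ℕ) :=
          Finset.sum_le_sum fun i _ => h (σ i) i
      _ = (k : WithBot ℕ) := by
          rw [Finset.sum_const, Finset.card_univ, Fintype.card_fin, nsmul_eq_mul, mul_one]
  calc (Equiv.Perm.sign σ : Polynomial ℝ).degree + (∏ i, M (σ i) i).degree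
      ≤ 0 + (k : WithBot ℕ) := add_le_add h1 h2
    _ = (k : WithBot ℕ) := zero_add _

lemma Ppoly_adjugate_degree (E A : Matrix (Fin nn) (Fin nn) ℝ) (i j : Fin nn) :
    ((Ppoly E A).adjugate i j).degree ≤ (nn : WithBot ℕ) := by
  rw [Matrix.adjugate_apply]
  refine det_degree_le _ fun a b => ?_
  rcases eq_or_ne a j with rfl | hne
  · rw [Matrix.updateRow_self]
    rcases eq_or_ne b i with rfl | h
    · simp
    · simp [Pi.single_eq_of_ne h]
  · rw [Matrix.updateRow_ne hne]
    exact Ppoly_entry_degree E A a b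

lemma Ppoly_eq (E A : Matrix (Fin nn) (Fin nn) ℝ) (hE : IsUnit E.det) :
    Ppoly E A = ((Polynomial.C : ℝ →+* Polynomial ℝ).mapMatrix E) * charmatrix (E⁻¹ * A) := by
  have h2 : ((Polynomial.C : ℝ →+* Polynomial ℝ).mapMatrix E)
      * ((Polynomial.C : ℝ →+* Polynomial ℝ).mapMatrix (E⁻¹ * A))
      = (Polynomial.C : ℝ →+* Polynomial ℝ).mapMatrix A := by
    rw [← _root_.map_mul, ← Matrix.mul_assoc, Matrix.mul_nonsing_inv _ hE, Matrix.one_mul]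
  rw [charmatrix, Matrix.mul_sub, h2]
  ext i j
  rw [Matrix.sub_apply, Matrix.scalar_apply, Matrix.mul_diagonal]
  simp [Ppoly, RingHom.mapMatrix_apply]

lemma Ppoly_det (E A : Matrix (Fin nn) (Fin nn) ℝ) (hE : IsUnit E.det) :
    (Ppoly E A).det = Polynomial.C E.det * (E⁻¹ * A).charpoly := by
  rw [Ppoly_eq E A hE, Matrix.det_mul, Matrix.charpoly, ← RingHom.map_det]

lemma Ppoly_det_ne_zero (E A : Matrix (Fin nn) (Fin nn) ℝ) (hE : IsUnit E.det) :
    (Ppoly E A).det ≠ 0 := by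
  rw [Ppoly_det E A hE]
  exact mul_ne_zero (by simpa using hE.ne_zero) (Matrix.charpoly_monic _).ne_zero

lemma Ppoly_det_degree (E A : Matrix (Fin nn) (Fin nn) ℝ) (hE : IsUnit E.det) :
    (Ppoly E A).det.degree = (nn : WithBot ℕ) := by
  rw [Ppoly_det E A hE, Polynomial.degree_C_mul (by simpa using hE.ne_zero),
    Matrix.charpoly_degree_eq_dim, Fintype.card_fin]

lemma Ppoly_map (E A : Matrix (Fin nn) (Fin nn) ℝ) :
    (Ppoly E A).map (algebraMap (Polynomial ℝ) RF)
      = (RatFunc.X : RF) • toRF E - toRF A := by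
  ext i j
  simp [Ppoly, toRF, Matrix.sub_apply, Matrix.smul_apply, RatFunc.algebraMap_C,
    RatFunc.algebraMap_X, smul_eq_mul]
  ring

lemma Ppoly_aeval (E A : Matrix (Fin nn) (Fin nn) ℝ) (z : ℂ) :
    Polynomial.aeval z (Ppoly E A).det = (z • toC E - toC A).det := by
  have h := RingHom.map_det ((Polynomial.aeval z : Polynomial ℝ →ₐ[ℝ] ℂ) : Polynomial ℝ →+* ℂ)
    (Ppoly E A)
  rw [show ((Polynomial.aeval z : Polynomial ℝ →ₐ[ℝ] ℂ) : Polynomial ℝ →+* ℂ)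
      ((Ppoly E A).det) = Polynomial.aeval z (Ppoly E A).det from rfl] at h
  rw [h]
  congr 1
  ext i j
  simp [Ppoly, toC, RingHom.mapMatrix_apply, Matrix.sub_apply, Matrix.smul_apply, smul_eq_mul]
  ring

lemma Ppoly_roots (E A : Matrix (Fin nn) (Fin nn) ℝ)
    (hstab : ∀ z : ℂ, (toC A - z • toC E).det = 0 → z.re < 0) :
    ∀ z : ℂ, Polynomial.aeval z (Ppoly E A).det = 0 → z.re < 0 := by
  intro z hz
  rw [Ppoly_aeval] at hz
  apply hstab z
  rw [show z • toC E - toC A = -(toC A - z • toC E) from (neg_sub _ _).symm,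
    Matrix.det_neg] at hz
  rcases mul_eq_zero.mp hz with h | h
  · exact absurd h (pow_ne_zero _ (by norm_num))
  · exact h

lemma pencil_det_eq (E A : Matrix (Fin nn) (Fin nn) ℝ) :
    ((RatFunc.X : RF) • toRF E - toRF A).det
      = algebraMap (Polynomial ℝ) RF (Ppoly E A).det := by
  rw [← Ppoly_map, RingHom.map_det (algebraMap (Polynomial ℝ) RF) (Ppoly E A)]
  rfl

lemma pencil_det_isUnit (E A : Matrix (Fin nn) (Fin nn) ℝ) (hE : IsUnit E.det) :
    IsUnit ((RatFunc.X : RF) • toRF E - toRF A).det := by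
  rw [pencil_det_eq, isUnit_iff_ne_zero]
  simpa using fun h => Ppoly_det_ne_zero E A hE (RatFunc.algebraMap_injective ℝ (by simpa using h))

end AuxPencil
section AuxTfm

lemma mul_entry_degree_le {a b c : Type*} [Fintype b] (M : Matrix a b (Polynomial ℝ))
    (N : Matrix b c (Polynomial ℝ)) {dM dN : WithBot ℕ}
    (hM : ∀ i j, (M i j).degree ≤ dM) (hN : ∀ i j, (N i j).degree ≤ dN)
    (i : a) (j : c) : ((M * N) i j).degree ≤ dM + dN := by
  rw [Matrix.mul_apply]
  refine le_trans (Polynomial.degree_sum_le _ _) (Finset.sup_le fun k _ => ?_)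
  exact le_trans (Polynomial.degree_mul_le _ _) (add_le_add (hM i k) (hN k j))

lemma tfm_stable {nn pp mm : ℕ} (E A : Matrix (Fin nn) (Fin nn) ℝ)
    (B : Matrix (Fin nn) (Fin mm) ℝ) (C : Matrix (Fin pp) (Fin nn) ℝ)
    (D : Matrix (Fin pp) (Fin mm) ℝ) (hE : IsUnit E.det)
    (hstab : ∀ z : ℂ, (toC A - z • toC E).det = 0 → z.re < 0) :
    MStable (tfm E A B C D) := by
  intro i j
  set aM := algebraMap (Polynomial ℝ) RF with haM
  set P : Matrix (Fin nn) (Fin nn) RF := (RatFunc.X : RF) • toRF E - toRF A with hP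
  set d : Polynomial ℝ := (Ppoly E A).det with hd
  have hd0 : d ≠ 0 := Ppoly_det_ne_zero E A hE
  have hddeg : d.degree = (nn : WithBot ℕ) := Ppoly_det_degree E A hE
  have hdroots : ∀ z : ℂ, Polynomial.aeval z d = 0 → z.re < 0 := Ppoly_roots E A hstab
  have hPdet : P.det = aM d := pencil_det_eq E A
  have haMd : aM d ≠ 0 := fun h => hd0 ((map_eq_zero_iff aM (RatFunc.algebraMap_injective ℝ)).mp h)
  have hPadj : P.adjugate = (Ppoly E A).adjugate.map aM := by
    have h := RingHom.map_adjugate aM (Ppoly E A)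
    rw [RingHom.mapMatrix_apply, RingHom.mapMatrix_apply, Ppoly_map] at h
    exact h.symm
  set Q : Matrix (Fin pp) (Fin mm) (Polynomial ℝ) :=
    (C.map Polynomial.C) * (Ppoly E A).adjugate * (B.map Polynomial.C) with hQ
  have hCmap : toRF C = (C.map Polynomial.C).map aM := by
    ext a b; simp [toRF, haM, ← RatFunc.algebraMap_C]
  have hBmap : toRF B = (B.map Polynomial.C).map aM := by
    ext a b; simp [toRF, haM, ← RatFunc.algebraMap_C]
  have hmain : toRF C * P⁻¹ * toRF B = (aM d)⁻¹ • Q.map aM := by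
    rw [Matrix.inv_def, Ring.inverse_eq_inv, hPdet, hPadj, hCmap, hBmap, hQ,
      Matrix.map_mul, Matrix.map_mul]
    rw [Matrix.mul_smul, Matrix.smul_mul]
  have hentry : tfm E A B C D i j
      = aM (Q i j + Polynomial.C (D i j) * d) / aM d := by
    rw [tfm, ← hP, Matrix.add_apply, hmain, Matrix.smul_apply, Matrix.map_apply]
    rw [show toRF D i j = aM (Polynomial.C (D i j)) by simp [toRF, haM, ← RatFunc.algebraMap_C]]
    rw [_root_.map_add, _root_.map_mul]
    rw [smul_eq_mul, eq_div_iff haMd, add_mul, inv_mul_eq_div, div_mul_cancel₀ _ haMd]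
  rw [hentry]
  apply RFstable_div hd0 _ hdroots
  have hQdeg : (Q i j).degree ≤ (nn : WithBot ℕ) := by
    have h1 : ∀ a b, ((C.map Polynomial.C) a b).degree ≤ (0 : WithBot ℕ) := by
      intro a b; exact Polynomial.degree_C_le
    have h2 : ∀ a b, (((Ppoly E A).adjugate) a b).degree ≤ (nn : WithBot ℕ) :=
      Ppoly_adjugate_degree E A
    have h3 : ∀ a b, ((B.map Polynomial.C) a b).degree ≤ (0 : WithBot ℕ) := by
      intro a b; exact Polynomial.degree_C_le
    have := mul_entry_degree_le _ _ (mul_entry_degree_le _ _ h1 h2) h3 i j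
    simpa using this
  refine le_trans (Polynomial.degree_add_le _ _) ?_
  rw [hddeg]
  refine max_le hQdeg ?_
  refine le_trans (Polynomial.degree_mul_le _ _) ?_
  have := add_le_add (Polynomial.degree_C_le (a := D i j)) (le_of_eq hddeg)
  simpa using this

end AuxTfm
section AuxFlip

/-- substitution X ↦ -X on polynomials -/
def flipP (p : Polynomial ℝ) : Polynomial ℝ := p.comp (-Polynomial.X)

lemma flipP_add (p q : Polynomial ℝ) : flipP (p + q) = flipP p + flipP q :=
  Polynomial.add_comp
lemma flipP_mul (p q : Polynomial ℝ) : flipP (p * q) = flipP p * flipP q :=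
  Polynomial.mul_comp _ _ _
lemma flipP_flipP (p : Polynomial ℝ) : flipP (flipP p) = p := by
  rw [flipP, flipP, Polynomial.comp_assoc]
  simp
lemma flipP_injective : Function.Injective flipP :=
  Function.LeftInverse.injective flipP_flipP
lemma flipP_ne_zero {p : Polynomial ℝ} (h : p ≠ 0) : flipP p ≠ 0 := by
  intro h0
  apply h
  rw [← flipP_flipP p, h0, flipP, Polynomial.zero_comp]

lemma eval₂_flip (p : Polynomial ℝ) :
    Polynomial.eval₂ (algebraMap ℝ RF) (-(RatFunc.X : RF)) p
      = algebraMap (Polynomial ℝ) RF (flipP p) := by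
  have h := Polynomial.hom_eval₂ p (Polynomial.C : ℝ →+* Polynomial ℝ)
    (algebraMap (Polynomial ℝ) RF) (-Polynomial.X)
  have hfc : ((algebraMap (Polynomial ℝ) RF).comp (Polynomial.C : ℝ →+* Polynomial ℝ))
      = algebraMap ℝ RF := RingHom.ext fun c => by simp [RatFunc.algebraMap_C]
  have hx : algebraMap (Polynomial ℝ) RF (-Polynomial.X) = -(RatFunc.X : RF) := by
    simp [RatFunc.algebraMap_X]
  rw [flipP, Polynomial.comp, h, hfc, hx]

lemma flipS_eq (f : RF) :
    flipS f = algebraMap (Polynomial ℝ) RF (flipP f.num)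
      / algebraMap (Polynomial ℝ) RF (flipP f.denom) := by
  rw [flipS, RatFunc.eval, eval₂_flip, eval₂_flip]

lemma flipS_div (p q : Polynomial ℝ) :
    flipS (algebraMap (Polynomial ℝ) RF p / algebraMap (Polynomial ℝ) RF q)
      = algebraMap (Polynomial ℝ) RF (flipP p) / algebraMap (Polynomial ℝ) RF (flipP q) := by
  rcases eq_or_ne q 0 with rfl | hq
  · simp [flipS_eq, flipP, RatFunc.num_zero, RatFunc.denom_zero]
  set f := algebraMap (Polynomial ℝ) RF p / algebraMap (Polynomial ℝ) RF q with hf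
  have hcross : f.num * q = f.denom * p := by
    apply RatFunc.algebraMap_injective ℝ
    rw [_root_.map_mul, _root_.map_mul]
    have h1 : algebraMap (Polynomial ℝ) RF f.num / algebraMap _ RF f.denom
        = algebraMap _ RF p / algebraMap _ RF q := by rw [RatFunc.num_div_denom]
    rw [div_eq_div_iff (RatFunc.algebraMap_ne_zero f.denom_ne_zero)
      (RatFunc.algebraMap_ne_zero hq)] at h1
    rw [h1]; ring
  have hcross2 : flipP f.num * flipP q = flipP f.denom * flipP p := by
    rw [← flipP_mul, ← flipP_mul, hcross]
  rw [flipS_eq, div_eq_div_iff (RatFunc.algebraMap_ne_zero (flipP_ne_zero f.denom_ne_zero))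
    (RatFunc.algebraMap_ne_zero (flipP_ne_zero hq)), ← _root_.map_mul, ← _root_.map_mul,
    hcross2]
  ring_nf

lemma flipS_mul (f g : RF) : flipS (f * g) = flipS f * flipS g := by
  conv_lhs => rw [← RatFunc.num_div_denom f, ← RatFunc.num_div_denom g]
  rw [div_mul_div_comm, ← _root_.map_mul, ← _root_.map_mul, flipS_div, flipP_mul, flipP_mul,
    _root_.map_mul, _root_.map_mul, ← div_mul_div_comm, ← flipS_div, ← flipS_div,
    RatFunc.num_div_denom, RatFunc.num_div_denom]

lemma flipS_add (f g : RF) : flipS (f + g) = flipS f + flipS g := by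
  conv_lhs => rw [← RatFunc.num_div_denom f, ← RatFunc.num_div_denom g]
  rw [div_add_div _ _ (RatFunc.algebraMap_ne_zero f.denom_ne_zero)
    (RatFunc.algebraMap_ne_zero g.denom_ne_zero), ← _root_.map_mul, ← _root_.map_mul,
    ← _root_.map_mul, ← _root_.map_add, flipS_div]
  rw [flipP_add, flipP_mul, flipP_mul, flipP_mul, _root_.map_add, _root_.map_mul,
    _root_.map_mul, _root_.map_mul]
  rw [flipS_eq f, flipS_eq g,
    div_add_div _ _ (RatFunc.algebraMap_ne_zero (flipP_ne_zero f.denom_ne_zero))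
    (RatFunc.algebraMap_ne_zero (flipP_ne_zero g.denom_ne_zero))]

lemma flipS_algebraMapP (p : Polynomial ℝ) :
    flipS (algebraMap (Polynomial ℝ) RF p) = algebraMap (Polynomial ℝ) RF (flipP p) := by
  have := flipS_div p 1
  simpa [flipP] using this

lemma flipS_one : flipS (1 : RF) = 1 := by
  have := flipS_algebraMapP 1
  simpa [flipP] using this

lemma flipS_zero : flipS (0 : RF) = 0 := by
  have := flipS_algebraMapP 0
  simpa [flipP] using this

lemma flipS_const (c : ℝ) : flipS (algebraMap ℝ RF c) = algebraMap ℝ RF c := by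
  have h : algebraMap ℝ RF c = algebraMap (Polynomial ℝ) RF (Polynomial.C c) := by
    simp [RatFunc.algebraMap_C]
  rw [h, flipS_algebraMapP]
  simp [flipP]

lemma flipS_X : flipS (RatFunc.X : RF) = -RatFunc.X := by
  have h : (RatFunc.X : RF) = algebraMap (Polynomial ℝ) RF Polynomial.X := by
    simp [RatFunc.algebraMap_X]
  rw [h, flipS_algebraMapP]
  simp [flipP, RatFunc.algebraMap_X]

/-- flipS as ring hom -/
def flipRH : RF →+* RF where
  toFun := flipS
  map_one' := flipS_one
  map_mul' := flipS_mul
  map_zero' := flipS_zero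
  map_add' := flipS_add

lemma flipRH_apply (f : RF) : flipRH f = flipS f := rfl

end AuxFlip
section AuxMat

lemma toRF_mul {a b c : Type*} [Fintype b] (A : Matrix a b ℝ) (B : Matrix b c ℝ) :
    toRF (A * B) = toRF A * toRF B := Matrix.map_mul

lemma toRF_one {a : Type*} [Fintype a] [DecidableEq a] :
    toRF (1 : Matrix a a ℝ) = 1 := Matrix.map_one _ (map_zero _) (map_one _)

lemma toRF_add {a b : Type*} (A B : Matrix a b ℝ) : toRF (A + B) = toRF A + toRF B :=
  Matrix.map_add _ (map_add _) _ _

lemma toRF_neg {a b : Type*} (A : Matrix a b ℝ) : toRF (-A) = -toRF A := by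
  ext i j; simp [toRF]

lemma toRF_transpose {a b : Type*} (A : Matrix a b ℝ) : toRF Aᵀ = (toRF A)ᵀ := by
  ext i j; simp [toRF]

lemma flipM_mul {a b c : Type*} [Fintype b] (A : Matrix a b RF) (B : Matrix b c RF) :
    (A * B).map flipS = A.map flipS * B.map flipS :=
  Matrix.map_mul (f := flipRH)

lemma flipM_add {a b : Type*} (A B : Matrix a b RF) :
    (A + B).map flipS = A.map flipS + B.map flipS :=
  Matrix.map_add _ (fun x y => flipS_add x y) _ _

lemma flipM_sub {a b : Type*} (A B : Matrix a b RF) :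
    (A - B).map flipS = A.map flipS - B.map flipS := by
  ext i j
  simp only [Matrix.map_apply, Matrix.sub_apply]
  exact map_sub flipRH _ _

lemma toRF_sub {a b : Type*} (A B : Matrix a b ℝ) : toRF (A - B) = toRF A - toRF B := by
  ext i j; simp [toRF]

lemma flipM_one {a : Type*} [Fintype a] [DecidableEq a] :
    (1 : Matrix a a RF).map flipS = 1 := Matrix.map_one _ flipS_zero flipS_one

lemma flipM_toRF {a b : Type*} (A : Matrix a b ℝ) : (toRF A).map flipS = toRF A := by
  ext i j
  simp only [toRF, Matrix.map_apply]
  exact flipS_const _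

lemma flipM_smulX {a b : Type*} (A : Matrix a b RF) :
    ((RatFunc.X : RF) • A).map flipS = -((RatFunc.X : RF) • (A.map flipS)) := by
  ext i j
  simp only [Matrix.map_apply, Matrix.smul_apply, Matrix.neg_apply, smul_eq_mul, flipS_mul,
    flipS_X]
  ring

lemma map_inv_flip {k : ℕ} (A : Matrix (Fin k) (Fin k) RF) (h : IsUnit A.det) :
    A⁻¹.map flipS = (A.map flipS)⁻¹ := by
  have h1 : (A.map flipS) * (A⁻¹.map flipS) = 1 := by
    rw [← flipM_mul, Matrix.mul_nonsing_inv _ h, flipM_one]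
  exact (Matrix.inv_eq_right_inv h1).symm

lemma flipM_transpose {a b : Type*} (A : Matrix a b RF) :
    (Aᵀ).map flipS = (A.map flipS)ᵀ := by
  ext i j; simp

lemma submatrix_mul_id {a b c d : Type*} [Fintype b] (A : Matrix a b RF) (B : Matrix b c RF)
    (r : d → a) : (A * B).submatrix r id = A.submatrix r id * B := by
  ext i j; simp [Matrix.mul_apply]

end AuxMat
section AuxAbstract

variable {nt mt pt qt : Type*} [Fintype nt] [DecidableEq nt] [Fintype mt] [DecidableEq mt]
  [Fintype pt]
set_option linter.unusedSectionVars false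

lemma hkey2_of_hkey (Pi Qi : Matrix nt nt RF) (b : Matrix nt mt RF) (f : Matrix mt nt RF)
    (hkey : Pi * (b * f) * Qi = Qi - Pi) (Y : Matrix nt mt RF) :
    Pi * (b * (f * (Qi * Y))) = Qi * Y - Pi * Y := by
  calc Pi * (b * (f * (Qi * Y))) = Pi * (b * f) * Qi * Y := by
        simp only [Matrix.mul_assoc]
    _ = (Qi - Pi) * Y := by rw [hkey]
    _ = Qi * Y - Pi * Y := Matrix.sub_mul _ _ _

lemma factor_inverse (Pi Qi : Matrix nt nt RF) (b : Matrix nt mt RF) (f : Matrix mt nt RF)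
    (h hi : Matrix mt mt RF) (hkey : Pi * (b * f) * Qi = Qi - Pi) (hh : h * hi = 1) :
    (-(h * f) * Pi * b + h) * (f * Qi * (b * hi) + hi) = 1 := by
  simp only [Matrix.add_mul, Matrix.mul_add, Matrix.neg_mul, Matrix.mul_assoc]
  rw [hkey2_of_hkey Pi Qi b f hkey (b * hi), hh]
  simp only [Matrix.mul_sub]
  abel

lemma factor_tfm (Pi Qi : Matrix nt nt RF) (b : Matrix nt mt RF) (f : Matrix mt nt RF)
    (hi : Matrix mt mt RF) (c : Matrix pt nt RF) (d : Matrix pt mt RF)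
    (hkey : Pi * (b * f) * Qi = Qi - Pi) :
    (c * Pi * b + d) * (f * Qi * (b * hi) + hi)
      = (c + d * f) * Qi * (b * hi) + d * hi := by
  simp only [Matrix.add_mul, Matrix.mul_add, Matrix.mul_assoc]
  rw [hkey2_of_hkey Pi Qi b f hkey (b * hi)]
  simp only [Matrix.mul_sub]
  abel

lemma normalized_abstract (Φ Ψ e x : Matrix nt nt RF) (bb : Matrix nt mt RF)
    (cc : Matrix pt nt RF) (dd : Matrix pt mt RF)
    (hΦ : IsUnit Φ.det) (hΨ : IsUnit Ψ.det) (hx : xᵀ = x)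
    (hcc : ccᵀ * cc = eᵀ * (x * Φ) + Ψᵀ * (x * e))
    (hcd : ccᵀ * dd = -(eᵀ * (x * bb)))
    (hdd : ddᵀ * dd = 1) :
    (cc * Ψ⁻¹ * bb + dd)ᵀ * (cc * Φ⁻¹ * bb + dd) = 1 := by
  have hΨT : IsUnit (Ψᵀ).det := by rwa [Matrix.det_transpose]
  have hdc : ddᵀ * cc = -(bbᵀ * (x * e)) := by
    have h := congrArg Matrix.transpose hcd
    rw [Matrix.transpose_mul, Matrix.transpose_transpose, Matrix.transpose_neg,
      Matrix.transpose_mul, Matrix.transpose_mul, Matrix.transpose_transpose, hx] at h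
    rw [h]
    simp only [Matrix.mul_assoc]
  have e1 : (Ψᵀ)⁻¹ * (ccᵀ * (cc * (Φ⁻¹ * bb)))
      = (Ψᵀ)⁻¹ * (eᵀ * (x * bb)) + x * (e * (Φ⁻¹ * bb)) := by
    have h1 : ccᵀ * (cc * (Φ⁻¹ * bb)) = (ccᵀ * cc) * (Φ⁻¹ * bb) := by
      simp only [Matrix.mul_assoc]
    rw [h1, hcc, Matrix.add_mul]
    have h2 : eᵀ * (x * Φ) * (Φ⁻¹ * bb) = eᵀ * (x * bb) := by
      calc eᵀ * (x * Φ) * (Φ⁻¹ * bb) = eᵀ * (x * (Φ * (Φ⁻¹ * bb))) := by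
            simp only [Matrix.mul_assoc]
        _ = eᵀ * (x * bb) := by
            rw [← Matrix.mul_assoc Φ, Matrix.mul_nonsing_inv _ hΦ, Matrix.one_mul]
    have h3 : (Ψᵀ)⁻¹ * (Ψᵀ * (x * e) * (Φ⁻¹ * bb)) = x * (e * (Φ⁻¹ * bb)) := by
      calc (Ψᵀ)⁻¹ * (Ψᵀ * (x * e) * (Φ⁻¹ * bb))
          = (Ψᵀ)⁻¹ * Ψᵀ * (x * (e * (Φ⁻¹ * bb))) := by simp only [Matrix.mul_assoc]
        _ = x * (e * (Φ⁻¹ * bb)) := by rw [Matrix.nonsing_inv_mul _ hΨT, Matrix.one_mul]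
    rw [Matrix.mul_add, h2, h3]
  have e2 : (Ψᵀ)⁻¹ * (ccᵀ * dd) = -((Ψᵀ)⁻¹ * (eᵀ * (x * bb))) := by
    rw [hcd, Matrix.mul_neg]
  have e3 : ddᵀ * (cc * (Φ⁻¹ * bb)) = -(bbᵀ * (x * (e * (Φ⁻¹ * bb)))) := by
    calc ddᵀ * (cc * (Φ⁻¹ * bb)) = (ddᵀ * cc) * (Φ⁻¹ * bb) := by
          simp only [Matrix.mul_assoc]
      _ = -(bbᵀ * (x * e)) * (Φ⁻¹ * bb) := by rw [hdc]
      _ = -(bbᵀ * (x * (e * (Φ⁻¹ * bb)))) := by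
          simp only [Matrix.neg_mul, Matrix.mul_assoc]
  simp only [Matrix.transpose_add, Matrix.transpose_mul, Matrix.transpose_nonsing_inv,
    Matrix.add_mul, Matrix.mul_add, Matrix.mul_assoc]
  rw [e1, e2, e3, hdd]
  simp only [Matrix.mul_add, Matrix.mul_neg]
  abel

lemma stacked_product {pp mm : ℕ} {q1 q2 : Type*} (U : Matrix (Fin (pp + mm)) q1 RF)
    (V : Matrix (Fin (pp + mm)) q2 RF) [Fintype q1] :
    (U.submatrix (Fin.castAdd mm) id)ᵀ * V.submatrix (Fin.castAdd mm) id
      + (U.submatrix (Fin.natAdd pp) id)ᵀ * V.submatrix (Fin.natAdd pp) id = Uᵀ * V := by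
  ext i j
  simp only [Matrix.add_apply, Matrix.mul_apply, Matrix.transpose_apply, Matrix.submatrix_apply,
    id_eq]
  rw [Fin.sum_univ_add]

lemma map_submatrix {a b c : Type*} (U : Matrix a b RF) (r : c → a) :
    (U.map flipS).submatrix r id = (U.submatrix r id).map flipS := by
  ext i j; simp

end AuxAbstract
section RealRiccati

variable {nn mm qq : ℕ}

lemma riccati_pack (Er Ar Xr : Matrix (Fin nn) (Fin nn) ℝ) (Br : Matrix (Fin nn) (Fin mm) ℝ)
    (Cr : Matrix (Fin qq) (Fin nn) ℝ) (Dr : Matrix (Fin qq) (Fin mm) ℝ)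
    (Fr : Matrix (Fin mm) (Fin nn) ℝ) (Hr : Matrix (Fin mm) (Fin mm) ℝ)
    (hXr : Xr.IsSymm) (hHr : IsUnit Hr.det) (hHrD : Hrᵀ * Hr = Drᵀ * Dr)
    (hFr : Fr = -((Drᵀ * Dr)⁻¹ * (Brᵀ * Xr * Er + Drᵀ * Cr)))
    (hric : Erᵀ * Xr * Ar + Arᵀ * Xr * Er + Crᵀ * Cr
      - (Erᵀ * Xr * Br + Crᵀ * Dr) * (Drᵀ * Dr)⁻¹ * (Brᵀ * Xr * Er + Drᵀ * Cr) = 0) :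
    ((Cr + Dr * Fr)ᵀ * (Cr + Dr * Fr)
        = -(Erᵀ * (Xr * (Ar + Br * Fr))) - (Ar + Br * Fr)ᵀ * (Xr * Er))
    ∧ ((Cr + Dr * Fr)ᵀ * (Dr * Hr⁻¹) = -(Erᵀ * (Xr * (Br * Hr⁻¹))))
    ∧ ((Dr * Hr⁻¹)ᵀ * (Dr * Hr⁻¹) = 1) := by
  set T := Drᵀ * Dr with hT
  have hXs : Xrᵀ = Xr := hXr
  have hTs : Tᵀ = T := by rw [hT, Matrix.transpose_mul, Matrix.transpose_transpose]
  have hTunit : IsUnit T.det := by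
    rw [← hHrD, Matrix.det_mul, Matrix.det_transpose]
    exact hHr.mul hHr
  have hTT : T * T⁻¹ = 1 := Matrix.mul_nonsing_inv _ hTunit
  have hTF : T * Fr = -(Brᵀ * Xr * Er + Drᵀ * Cr) := by
    rw [hFr, Matrix.mul_neg, ← Matrix.mul_assoc, hTT, Matrix.one_mul]
  have hDC : Drᵀ * Cr = -(T * Fr) - Brᵀ * (Xr * Er) := by
    rw [hTF]
    simp only [neg_neg, Matrix.mul_assoc]
    abel
  have hCD : Crᵀ * Dr = -(Frᵀ * T) - Erᵀ * (Xr * Br) := by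
    have h := congrArg Matrix.transpose hDC
    simp only [Matrix.transpose_mul, Matrix.transpose_sub, Matrix.transpose_neg,
      Matrix.transpose_transpose, hTs, hXs] at h
    rw [h]
    simp only [Matrix.mul_assoc]
  have hprod : (Erᵀ * Xr * Br + Crᵀ * Dr) * T⁻¹ * (Brᵀ * Xr * Er + Drᵀ * Cr)
      = Frᵀ * (T * Fr) := by
    have h1 : Erᵀ * Xr * Br + Crᵀ * Dr = -(Frᵀ * T) := by
      rw [hCD]
      simp only [Matrix.mul_assoc]
      abel
    have h2 : Brᵀ * Xr * Er + Drᵀ * Cr = -(T * Fr) := by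
      rw [hDC]
      simp only [Matrix.mul_assoc]
      abel
    rw [h1, h2]
    simp only [Matrix.neg_mul, Matrix.mul_neg, neg_neg]
    calc Frᵀ * T * T⁻¹ * (T * Fr) = Frᵀ * (T * T⁻¹) * (T * Fr) := by
          simp only [Matrix.mul_assoc]
      _ = Frᵀ * (T * Fr) := by rw [hTT, Matrix.mul_one]
  have hCC : Crᵀ * Cr = Frᵀ * (T * Fr) - Erᵀ * (Xr * Ar) - Arᵀ * (Xr * Er) := by
    have h := hric
    rw [hprod] at h
    have h2 : Erᵀ * Xr * Ar + Arᵀ * Xr * Er + Crᵀ * Cr = Frᵀ * (T * Fr) := by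
      have := sub_eq_zero.mp h
      exact this
    calc Crᵀ * Cr
        = (Erᵀ * Xr * Ar + Arᵀ * Xr * Er + Crᵀ * Cr) - Erᵀ * Xr * Ar - Arᵀ * Xr * Er := by
          abel
      _ = Frᵀ * (T * Fr) - Erᵀ * (Xr * Ar) - Arᵀ * (Xr * Er) := by
          rw [h2]
          simp only [Matrix.mul_assoc]
  have t1 : Crᵀ * (Dr * Fr) = -(Frᵀ * (T * Fr)) - Erᵀ * (Xr * (Br * Fr)) := by
    rw [← Matrix.mul_assoc, hCD]
    simp only [Matrix.sub_mul, Matrix.neg_mul, Matrix.mul_assoc]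
  have t2 : Frᵀ * (Drᵀ * Cr) = -(Frᵀ * (T * Fr)) - Frᵀ * (Brᵀ * (Xr * Er)) := by
    rw [hDC]
    simp only [Matrix.mul_sub, Matrix.mul_neg]
  have t3 : Frᵀ * (Drᵀ * (Dr * Fr)) = Frᵀ * (T * Fr) := by
    rw [← Matrix.mul_assoc Drᵀ, ← hT]
  refine ⟨?_, ?_, ?_⟩
  · rw [Matrix.transpose_add, Matrix.transpose_mul, Matrix.add_mul, Matrix.mul_add,
      Matrix.mul_add]
    rw [t1]
    simp only [Matrix.mul_assoc]
    rw [show Frᵀ * (Drᵀ * Cr) = -(Frᵀ * (T * Fr)) - Frᵀ * (Brᵀ * (Xr * Er)) from t2,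
      show Frᵀ * (Drᵀ * (Dr * Fr)) = Frᵀ * (T * Fr) from t3, hCC]
    rw [Matrix.transpose_add, Matrix.transpose_mul]
    simp only [Matrix.mul_add, Matrix.add_mul, Matrix.mul_assoc]
    abel
  · rw [Matrix.transpose_add, Matrix.transpose_mul, Matrix.add_mul]
    have u1 : Crᵀ * (Dr * Hr⁻¹) = -(Frᵀ * (T * Hr⁻¹)) - Erᵀ * (Xr * (Br * Hr⁻¹)) := by
      rw [← Matrix.mul_assoc, hCD]
      simp only [Matrix.sub_mul, Matrix.neg_mul, Matrix.mul_assoc]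
    have u2 : Frᵀ * Drᵀ * (Dr * Hr⁻¹) = Frᵀ * (T * Hr⁻¹) := by
      rw [Matrix.mul_assoc, ← Matrix.mul_assoc Drᵀ, ← hT]
    rw [u1, u2]
    abel
  · have hHH : Hr * Hr⁻¹ = 1 := Matrix.mul_nonsing_inv _ hHr
    calc (Dr * Hr⁻¹)ᵀ * (Dr * Hr⁻¹) = Hr⁻¹ᵀ * (Drᵀ * Dr) * Hr⁻¹ := by
          rw [Matrix.transpose_mul]
          simp only [Matrix.mul_assoc]
      _ = Hr⁻¹ᵀ * Hrᵀ * (Hr * Hr⁻¹) := by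
          rw [← hT, ← hHrD]
          simp only [Matrix.mul_assoc]
      _ = (Hr * Hr⁻¹)ᵀ * (Hr * Hr⁻¹) := by rw [Matrix.transpose_mul]
      _ = 1 := by rw [hHH, Matrix.transpose_one, Matrix.one_mul]
  
end RealRiccati
/-- the spectral factor G₀ = -H_rF_r(sE_r - A_r)⁻¹B_r + H_r normalizes a
stable right coprime factorization: (N G₀⁻¹, M G₀⁻¹) is a stable normalized RCF of
G = N M⁻¹. -/
theorem stmt_6 {n m p : ℕ} (Er Ar : Matrix (Fin n) (Fin n) ℝ)
    (hEr : IsUnit Er.det)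
    (hstab : ∀ z : ℂ, (toC Ar - z • toC Er).det = 0 → z.re < 0)
    (Br : Matrix (Fin n) (Fin m) ℝ) (Cr : Matrix (Fin (p + m)) (Fin n) ℝ)
    (Dr : Matrix (Fin (p + m)) (Fin m) ℝ)
    (N : Matrix (Fin p) (Fin m) RF)
    (hN : N = (tfm Er Ar Br Cr Dr).submatrix (Fin.castAdd m) id)
    (M : Matrix (Fin m) (Fin m) RF)
    (hM : M = (tfm Er Ar Br Cr Dr).submatrix (Fin.natAdd p) id)
    (hMdet : M.det ≠ 0)
    (hcoprime : ∃ (Xtil : Matrix (Fin m) (Fin p) RF) (Ytil : Matrix (Fin m) (Fin m) RF),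
      MStable Xtil ∧ MStable Ytil ∧ Ytil * M - Xtil * N = 1)
    (Hr : Matrix (Fin m) (Fin m) ℝ) (hHr : IsUnit Hr.det) (hHrD : Hrᵀ * Hr = Drᵀ * Dr)
    -- X_r : symmetric stabilizing solution of the GCARE, with feedback F_r
    (Xr : Matrix (Fin n) (Fin n) ℝ) (hXr : Xr.IsSymm)
    (Fr : Matrix (Fin m) (Fin n) ℝ)
    (hFr : Fr = -((Drᵀ * Dr)⁻¹ * (Brᵀ * Xr * Er + Drᵀ * Cr)))
    (hric : Erᵀ * Xr * Ar + Arᵀ * Xr * Er + Crᵀ * Cr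
      - (Erᵀ * Xr * Br + Crᵀ * Dr) * (Drᵀ * Dr)⁻¹ * (Brᵀ * Xr * Er + Drᵀ * Cr) = 0)
    (hFstab : ∀ z : ℂ, (toC (Ar + Br * Fr) - z • toC Er).det = 0 → z.re < 0)
    (G₀ : Matrix (Fin m) (Fin m) RF) (hG₀ : G₀ = tfm Er Ar Br (-(Hr * Fr)) Hr)
    (Nhat : Matrix (Fin p) (Fin m) RF) (hNhat : Nhat = N * G₀⁻¹)
    (Mhat : Matrix (Fin m) (Fin m) RF) (hMhat : Mhat = M * G₀⁻¹) :
    G₀.det ≠ 0 ∧ MStable Nhat ∧ MStable Mhat ∧ Mhat.det ≠ 0 ∧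
    N * M⁻¹ = Nhat * Mhat⁻¹ ∧
    (∃ (Xtil' : Matrix (Fin m) (Fin p) RF) (Ytil' : Matrix (Fin m) (Fin m) RF),
      MStable Xtil' ∧ MStable Ytil' ∧ Ytil' * Mhat - Xtil' * Nhat = 1) ∧
    (Nhat.map flipS)ᵀ * Nhat + (Mhat.map flipS)ᵀ * Mhat = 1 := by
  classical
  obtain ⟨R1, R2, R3⟩ := riccati_pack Er Ar Xr Br Cr Dr Fr Hr hXr hHr hHrD hFr hric
  set sX : RF := (RatFunc.X : RF) with hsX
  have hPu : IsUnit (sX • toRF Er - toRF Ar).det := pencil_det_isUnit Er Ar hEr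
  have hQu : IsUnit (sX • toRF Er - toRF (Ar + Br * Fr)).det :=
    pencil_det_isUnit Er (Ar + Br * Fr) hEr
  have hdiff : (sX • toRF Er - toRF Ar) - (sX • toRF Er - toRF (Ar + Br * Fr))
      = toRF Br * toRF Fr := by
    rw [toRF_add, toRF_mul]
    abel
  have hkey : (sX • toRF Er - toRF Ar)⁻¹ * (toRF Br * toRF Fr)
      * (sX • toRF Er - toRF (Ar + Br * Fr))⁻¹
      = (sX • toRF Er - toRF (Ar + Br * Fr))⁻¹ - (sX • toRF Er - toRF Ar)⁻¹ := by
    rw [← hdiff, Matrix.mul_sub, Matrix.sub_mul, Matrix.nonsing_inv_mul _ hPu,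
      Matrix.mul_assoc, Matrix.mul_nonsing_inv _ hQu, Matrix.mul_one, Matrix.one_mul]
  have hHH : toRF Hr * toRF Hr⁻¹ = 1 := by
    rw [← toRF_mul, Matrix.mul_nonsing_inv _ hHr, toRF_one]
  have hG0Z : G₀ * tfm Er (Ar + Br * Fr) (Br * Hr⁻¹) Fr Hr⁻¹ = 1 := by
    rw [hG₀, tfm, tfm, toRF_neg, toRF_mul Hr, toRF_mul Br]
    exact factor_inverse _ _ _ _ _ _ hkey hHH
  have hG0u : IsUnit G₀.det :=
    IsUnit.of_mul_eq_one (tfm Er (Ar + Br * Fr) (Br * Hr⁻¹) Fr Hr⁻¹).det (by rw [← Matrix.det_mul, hG0Z, Matrix.det_one])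
  have hG0inv : G₀⁻¹ = tfm Er (Ar + Br * Fr) (Br * Hr⁻¹) Fr Hr⁻¹ :=
    Matrix.inv_eq_right_inv hG0Z
  have hWfull : tfm Er Ar Br Cr Dr * tfm Er (Ar + Br * Fr) (Br * Hr⁻¹) Fr Hr⁻¹
      = tfm Er (Ar + Br * Fr) (Br * Hr⁻¹) (Cr + Dr * Fr) (Dr * Hr⁻¹) := by
    rw [tfm, tfm, tfm, toRF_add Cr, toRF_mul Dr, toRF_mul Br, toRF_mul Dr]
    exact factor_tfm _ _ _ _ _ _ _ hkey
  have hWstable : MStable (tfm Er (Ar + Br * Fr) (Br * Hr⁻¹) (Cr + Dr * Fr) (Dr * Hr⁻¹)) :=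
    tfm_stable Er (Ar + Br * Fr) _ _ _ hEr hFstab
  have hNhatW : Nhat
      = (tfm Er (Ar + Br * Fr) (Br * Hr⁻¹) (Cr + Dr * Fr) (Dr * Hr⁻¹)).submatrix
        (Fin.castAdd m) id := by
    rw [hNhat, hN, hG0inv, ← submatrix_mul_id, hWfull]
  have hMhatW : Mhat
      = (tfm Er (Ar + Br * Fr) (Br * Hr⁻¹) (Cr + Dr * Fr) (Dr * Hr⁻¹)).submatrix
        (Fin.natAdd p) id := by
    rw [hMhat, hM, hG0inv, ← submatrix_mul_id, hWfull]
  have hZu : IsUnit (tfm Er (Ar + Br * Fr) (Br * Hr⁻¹) Fr Hr⁻¹).det :=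
    IsUnit.of_mul_eq_one G₀.det (by rw [mul_comm, ← Matrix.det_mul, hG0Z, Matrix.det_one])
  refine ⟨hG0u.ne_zero, ?_, ?_, ?_, ?_, ?_, ?_⟩
  · rw [hNhatW]; intro i j; exact hWstable _ _
  · rw [hMhatW]; intro i j; exact hWstable _ _
  · rw [hMhat, Matrix.det_mul, hG0inv]
    exact mul_ne_zero hMdet hZu.ne_zero
  · rw [hNhat, hMhat, Matrix.mul_inv_rev, Matrix.nonsing_inv_nonsing_inv _ hG0u]
    rw [show N * G₀⁻¹ * (G₀ * M⁻¹) = N * (G₀⁻¹ * G₀ * M⁻¹) from by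
      simp only [Matrix.mul_assoc], Matrix.nonsing_inv_mul _ hG0u, Matrix.one_mul]
  · obtain ⟨Xt, Yt, hXt, hYt, hId⟩ := hcoprime
    have hG0stable : MStable G₀ := by
      rw [hG₀]; exact tfm_stable Er Ar Br _ Hr hEr hstab
    refine ⟨G₀ * Xt, G₀ * Yt, hG0stable.mul hXt, hG0stable.mul hYt, ?_⟩
    rw [hMhat, hNhat]
    calc G₀ * Yt * (M * G₀⁻¹) - G₀ * Xt * (N * G₀⁻¹)
        = G₀ * ((Yt * M - Xt * N) * G₀⁻¹) := by
          simp only [Matrix.mul_sub, Matrix.sub_mul, Matrix.mul_assoc]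
      _ = 1 := by rw [hId, Matrix.one_mul, Matrix.mul_nonsing_inv _ hG0u]
  · -- normalization
    rw [hNhatW, hMhatW, ← map_submatrix, ← map_submatrix, stacked_product]
    -- flip of W
    have hQflip : ((sX • toRF Er - toRF (Ar + Br * Fr)).map flipS)
        = -(sX • toRF Er) - toRF (Ar + Br * Fr) := by
      rw [flipM_sub, flipM_smulX, flipM_toRF, flipM_toRF]
    have hΨu : IsUnit (-(sX • toRF Er) - toRF (Ar + Br * Fr)).det := by
      have h1 : -(sX • toRF Er) - toRF (Ar + Br * Fr)
          = sX • toRF (-Er) - toRF (Ar + Br * Fr) := by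
        rw [toRF_neg, smul_neg]
      rw [h1]
      apply pencil_det_isUnit (-Er) (Ar + Br * Fr)
      rw [Matrix.det_neg, Fintype.card_fin]
      exact (isUnit_one.neg.pow n).mul hEr
    have hWflip : (tfm Er (Ar + Br * Fr) (Br * Hr⁻¹) (Cr + Dr * Fr) (Dr * Hr⁻¹)).map flipS
        = toRF (Cr + Dr * Fr) * (-(sX • toRF Er) - toRF (Ar + Br * Fr))⁻¹
          * toRF (Br * Hr⁻¹) + toRF (Dr * Hr⁻¹) := by
      rw [tfm, flipM_add, flipM_mul, flipM_mul, flipM_toRF, flipM_toRF, flipM_toRF,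
        map_inv_flip _ hQu, hQflip]
    rw [hWflip, tfm]
    apply normalized_abstract _ _ _ (toRF Xr) _ _ _ hQu hΨu
    · rw [← toRF_transpose, hXr]
    · -- hcc
      have hlift : (toRF (Cr + Dr * Fr))ᵀ * toRF (Cr + Dr * Fr)
          = -((toRF Er)ᵀ * (toRF Xr * toRF (Ar + Br * Fr)))
            - (toRF (Ar + Br * Fr))ᵀ * (toRF Xr * toRF Er) := by
        rw [← toRF_transpose, ← toRF_mul, R1]
        simp only [toRF_sub, toRF_neg, toRF_mul, toRF_transpose]
      rw [hlift]
      simp only [Matrix.mul_sub, Matrix.sub_mul, Matrix.neg_mul, Matrix.mul_neg,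
        Matrix.transpose_neg, Matrix.transpose_smul, Matrix.transpose_sub,
        Matrix.mul_smul, Matrix.smul_mul]
      abel
    · -- hcd
      rw [← toRF_transpose, ← toRF_mul, R2, toRF_neg, ← toRF_transpose]
      simp only [toRF_mul]
    · -- hdd
      rw [← toRF_transpose, ← toRF_mul, R3, toRF_one]

end
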